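/- Let E be a finite-dimensional real inner product space, p ≥ 1 an integer, and let σ > 0, A > 0, c > 0, u_min ∈ (0,1], f* ∈ ℝ and q a real number with q ≥ (p+1)/p. Let f : E → ℝ and let x : ℕ → E, u, R, s : ℕ → ℝ satisfy for all k: u (k+1) ∈ [u_min, 1]; R (k+1) = (1 - u (k+1))·R k + u (k+1)·f(x (k+1)); f* ≤ f(x k) ≤ R k; R k - R (k+1) ≥ u_min·c·‖x (k+1) - x k‖^(p+1); s (k+1) ≥ 0 and s (k+1) ≤ A·‖x (k+1) - x k‖^p; and f(x (k+1)) - f* ≤ σ·(s (k+1))^q. Then there exist constants C > 0, ρ ∈ (0,1) and K ∈ ℕ such that f(x k) - f* ≤ C·ρ^k for all k ≥ K. -/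

import Mathlib

open Filter Topology

set_option maxHeartbeats 1000000

/-- Theorem 5, case (1): under the KL-type inequality with exponent `q ≥ (p+1)/p`, the
NHOTA function values converge to `f*` linearly. -/
theorem nhota_kl_linear_rate
    {E : Type*} [NormedAddCommGroup E] [InnerProductSpace ℝ E] [FiniteDimensional ℝ E]
    (p : ℕ) (hp : 1 ≤ p) (σ A c u_min fstar : ℝ) (q : ℝ)
    (hσ : 0 < σ) (hA : 0 < A) (hc : 0 < c)
    (humin : 0 < u_min ∧ u_min ≤ 1)
    (hq : ((p : ℝ) + 1) / p ≤ q)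
    (f : E → ℝ) (x : ℕ → E) (u R s : ℕ → ℝ)
    (hu : ∀ k : ℕ, u_min ≤ u (k + 1) ∧ u (k + 1) ≤ 1)
    (hRrec : ∀ k : ℕ, R (k + 1) = (1 - u (k + 1)) * R k + u (k + 1) * f (x (k + 1)))
    (hbound : ∀ k : ℕ, fstar ≤ f (x k) ∧ f (x k) ≤ R k)
    (hdec : ∀ k : ℕ, u_min * c * ‖x (k + 1) - x k‖ ^ (p + 1) ≤ R k - R (k + 1))
    (hs : ∀ k : ℕ, 0 ≤ s (k + 1))
    (hsb : ∀ k : ℕ, s (k + 1) ≤ A * ‖x (k + 1) - x k‖ ^ p)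
    (hkl : ∀ k : ℕ, f (x (k + 1)) - fstar ≤ σ * s (k + 1) ^ q) :
    ∃ C : ℝ, 0 < C ∧ ∃ ρ : ℝ, 0 < ρ ∧ ρ < 1 ∧ ∃ K : ℕ,
      ∀ k : ℕ, K ≤ k → f (x k) - fstar ≤ C * ρ ^ k := by
  obtain ⟨hum0, hum1⟩ := humin
  have hp1 : (1 : ℝ) ≤ (p : ℝ) := by exact_mod_cast hp
  have hp0 : (0 : ℝ) < (p : ℝ) := by linarith
  have hq0 : 0 ≤ q := le_trans (by positivity) hq
  have hpq : (p : ℝ) + 1 ≤ (p : ℝ) * q := by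
    have := (div_le_iff₀ hp0).mp hq
    nlinarith
  set r : ℕ → ℝ := fun k => R k - fstar with hrdef
  have hr0 : ∀ k, 0 ≤ r k := by
    intro k; have h := hbound k; simp only [hrdef]; linarith [h.1, h.2]
  have hrdec : ∀ k, r (k + 1) ≤ r k := by
    intro k
    have h := hdec k
    have h2 : 0 ≤ u_min * c * ‖x (k + 1) - x k‖ ^ (p + 1) := by positivity
    simp only [hrdef]; linarith
  have hant : Antitone r := antitone_nat_of_succ_le hrdec
  have hbdd : BddBelow (Set.range r) := ⟨0, by rintro y ⟨k, rfl⟩; exact hr0 k⟩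
  have hconv : Tendsto r atTop (𝓝 (⨅ k, r k)) := tendsto_atTop_ciInf hant hbdd
  have hconv' : Tendsto (fun k => r (k + 1)) atTop (𝓝 (⨅ k, r k)) :=
    hconv.comp (tendsto_add_atTop_nat 1)
  have hDconv : Tendsto (fun k => r k - r (k + 1)) atTop (𝓝 0) := by
    have := hconv.sub hconv'
    simpa using this
  have hβ : (0 : ℝ) < u_min * c := by positivity
  obtain ⟨K, hK⟩ := eventually_atTop.mp (hDconv.eventually_lt_const hβ)
  set M : ℝ := σ * A ^ q / (u_min * c) with hMdef
  have hM0 : 0 < M := by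
    have := Real.rpow_pos_of_pos hA q
    positivity
  set ρ : ℝ := 1 - u_min / (1 + M) with hρdef
  have hρ1 : ρ < 1 := by
    have : 0 < u_min / (1 + M) := by positivity
    simp only [hρdef]; linarith
  have hρ0 : 0 < ρ := by
    have h1 : u_min / (1 + M) < 1 := by
      rw [div_lt_one (by linarith)]; linarith
    simp only [hρdef]; linarith
  -- key contraction step
  have hstep : ∀ k, K ≤ k → r (k + 1) ≤ ρ * r k := by
    intro k hk
    set d : ℝ := ‖x (k + 1) - x k‖ with hddef
    have hd0 : 0 ≤ d := norm_nonneg _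
    have hD : u_min * c * d ^ (p + 1) ≤ r k - r (k + 1) := by
      have := hdec k; simp only [hrdef]; linarith
    have hDlt : r k - r (k + 1) < u_min * c := hK k hk
    have hd1 : d ≤ 1 := by
      by_contra h
      push_neg at h
      have : (1 : ℝ) < d ^ (p + 1) := one_lt_pow₀ h (by omega)
      nlinarith
    -- f(x (k+1)) - fstar ≤ M * (r k - r (k+1))
    have hf : f (x (k + 1)) - fstar ≤ M * (r k - r (k + 1)) := by
      have h1 : s (k + 1) ^ q ≤ (A * d ^ p) ^ q :=
        Real.rpow_le_rpow (hs k) (hsb k) hq0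
      have h2 : (A * d ^ p) ^ q = A ^ q * d ^ ((p : ℝ) * q) := by
        rw [Real.mul_rpow (le_of_lt hA) (pow_nonneg hd0 p), ← Real.rpow_natCast d p,
          ← Real.rpow_mul hd0]
      have h3 : d ^ ((p : ℝ) * q) ≤ d ^ (((p : ℝ) + 1)) := by
        rcases eq_or_lt_of_le hd0 with h | h
        · rw [← h, Real.zero_rpow (by nlinarith), Real.zero_rpow (by nlinarith)]
        · exact Real.rpow_le_rpow_of_exponent_ge h hd1 hpq
      have h4 : d ^ (((p : ℝ) + 1)) = d ^ (p + 1) := by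
        rw [← Real.rpow_natCast d (p + 1)]; push_cast; ring_nf
      have h5 : d ^ (p + 1) ≤ (r k - r (k + 1)) / (u_min * c) := by
        rw [le_div_iff₀ hβ]; linarith [hD]
      have hAq : 0 < A ^ q := Real.rpow_pos_of_pos hA q
      calc f (x (k + 1)) - fstar ≤ σ * s (k + 1) ^ q := hkl k
        _ ≤ σ * (A ^ q * ((r k - r (k + 1)) / (u_min * c))) := by
            have : s (k + 1) ^ q ≤ A ^ q * ((r k - r (k + 1)) / (u_min * c)) := by
              calc s (k + 1) ^ q ≤ (A * d ^ p) ^ q := h1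
                _ = A ^ q * d ^ ((p : ℝ) * q) := h2
                _ ≤ A ^ q * ((r k - r (k + 1)) / (u_min * c)) := by
                    have := h3.trans (le_of_eq h4) |>.trans h5
                    exact mul_le_mul_of_nonneg_left this (le_of_lt hAq)
            exact mul_le_mul_of_nonneg_left this (le_of_lt hσ)
        _ = M * (r k - r (k + 1)) := by rw [hMdef]; field_simp
    -- recursion
    have hu1 := (hu k).1
    have hu2 := (hu k).2
    have hrec : r (k + 1) = (1 - u (k + 1)) * r k + u (k + 1) * (f (x (k + 1)) - fstar) := by
      simp only [hrdef]; rw [hRrec k]; ring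
    have hupos : 0 < u (k + 1) := lt_of_lt_of_le hum0 hu1
    have key : (1 + u (k + 1) * M) * r (k + 1) ≤ (1 - u (k + 1) + u (k + 1) * M) * r k := by
      have hfu : u (k + 1) * (f (x (k + 1)) - fstar) ≤ u (k + 1) * (M * (r k - r (k + 1))) :=
        mul_le_mul_of_nonneg_left hf (le_of_lt hupos)
      have hrec' : r (k + 1) ≤ (1 - u (k + 1)) * r k + u (k + 1) * (M * (r k - r (k + 1))) := by
        linarith [hrec, hfu]
      nlinarith [hrec']
    have h1M : (0 : ℝ) < 1 + u (k + 1) * M := by nlinarith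
    have ht : u_min / (1 + M) * (1 + u (k + 1) * M) ≤ u (k + 1) := by
      have h1 : u_min / (1 + M) * (1 + u (k + 1) * M) ≤ u_min / (1 + M) * (1 + M) := by
        have h0 : 1 + u (k + 1) * M ≤ 1 + M := by nlinarith
        have hpos : 0 ≤ u_min / (1 + M) := by positivity
        exact mul_le_mul_of_nonneg_left h0 hpos
      have h2 : u_min / (1 + M) * (1 + M) = u_min := by field_simp
      linarith
    have h2 : (1 - u (k + 1) + u (k + 1) * M) * r k ≤ (1 + u (k + 1) * M) * (ρ * r k) := by
      simp only [hρdef]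
      nlinarith [mul_le_mul_of_nonneg_right ht (hr0 k)]
    have := key.trans h2
    exact le_of_mul_le_mul_left this h1M
  -- iterate
  have hiter : ∀ n : ℕ, r (K + n) ≤ ρ ^ n * r K := by
    intro n
    induction n with
    | zero => simp
    | succ n ih =>
        have := hstep (K + n) (Nat.le_add_right K n)
        calc r (K + (n + 1)) = r ((K + n) + 1) := by ring_nf
          _ ≤ ρ * r (K + n) := this
          _ ≤ ρ * (ρ ^ n * r K) := mul_le_mul_of_nonneg_left ih (le_of_lt hρ0)
          _ = ρ ^ (n + 1) * r K := by ring
  refine ⟨(r K + 1) / ρ ^ K, div_pos (by linarith [hr0 K]) (pow_pos hρ0 K), ρ, hρ0, hρ1, K, ?_⟩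
  intro k hk
  have hb := (hbound k).2
  have h1 : f (x k) - fstar ≤ r k := by simp only [hrdef]; linarith
  have h2 : r k ≤ ρ ^ (k - K) * r K := by
    have := hiter (k - K)
    rwa [Nat.add_sub_cancel' hk] at this
  have h3 : ρ ^ (k - K) * r K ≤ (r K + 1) / ρ ^ K * ρ ^ k := by
    have hρK : (0:ℝ) < ρ ^ K := pow_pos hρ0 K
    have e : ρ ^ (k - K) = ρ ^ k / ρ ^ K := pow_sub₀ ρ (ne_of_gt hρ0) hk
    calc ρ ^ (k - K) * r K = (ρ ^ k * r K) / ρ ^ K := by rw [e]; ring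
      _ ≤ (ρ ^ k * (r K + 1)) / ρ ^ K := by
          gcongr
          linarith
      _ = (r K + 1) / ρ ^ K * ρ ^ k := by ring
  exact le_trans h1 (le_trans h2 h3)
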